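/- arXiv:1806.11238 — 3 statements merged into one kernel-verified Lean document; each statement's English description precedes it below -/
import Mathlib

section
/- In the same discrete scheme setting, for all $s, t \in \{0,\dots,n\}$ with $s \leq t$ and all $x \in \mathbb{R}$, $|v_n(s, x) - v_n(t, x)| \leq \bar\sigma^{\beta} ((t-s)/n)^{\beta/2}$. -/
open MeasureTheory Set

lemma tangent_rpow {β : ℝ} (hβ0 : 0 < β) (hβ1 : β ≤ 1) {u₀ : ℝ} (hu₀ : 0 < u₀)
    {u : ℝ} (hu : 0 ≤ u) :
    u ^ (β / 2) ≤ (1 - β / 2) * u₀ ^ (β / 2) + (β / 2) * u₀ ^ (β / 2 - 1) * u := by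
  have hw1 : (0:ℝ) ≤ β / 2 := by linarith
  have hw2 : (0:ℝ) ≤ 1 - β / 2 := by linarith
  have hgm := Real.geom_mean_le_arith_mean2_weighted hw1 hw2 hu hu₀.le (by ring)
  have hpos : (0:ℝ) < u₀ ^ (β / 2 - 1) := Real.rpow_pos_of_pos hu₀ _
  have := mul_le_mul_of_nonneg_right hgm hpos.le
  calc u ^ (β / 2) = u ^ (β / 2) * (u₀ ^ (1 - β / 2) * u₀ ^ (β / 2 - 1)) := by
        rw [← Real.rpow_add hu₀]; norm_num
    _ = u ^ (β / 2) * u₀ ^ (1 - β / 2) * u₀ ^ (β / 2 - 1) := by ring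
    _ ≤ (β / 2 * u + (1 - β / 2) * u₀) * u₀ ^ (β / 2 - 1) := this
    _ = (1 - β / 2) * (u₀ ^ (β / 2 - 1) * u₀ ^ (1:ℝ)) + β / 2 * u₀ ^ (β / 2 - 1) * u := by
        rw [Real.rpow_one]; ring
    _ = (1 - β / 2) * u₀ ^ (β / 2) + β / 2 * u₀ ^ (β / 2 - 1) * u := by
        rw [← Real.rpow_add hu₀]; norm_num

lemma csupr_abs_sub_const {ι : Type*} [Nonempty ι] (f : ι → ℝ) (c b : ℝ)
    (hb : BddAbove (range f)) (h : ∀ i, |f i - c| ≤ b) :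
    |(⨆ i, f i) - c| ≤ b := by
  rw [abs_le]
  constructor
  · obtain ⟨i⟩ := ‹Nonempty ι›
    have h1 := (abs_le.mp (h i)).1
    have h2 := le_ciSup hb i
    linarith
  · have : (⨆ i, f i) ≤ c + b := ciSup_le fun i => by
      have := (abs_le.mp (h i)).2; linarith
    linarith

lemma csupr_abs_sub_csupr {ι : Type*} [Nonempty ι] (f g : ι → ℝ) (b : ℝ)
    (hf : BddAbove (range f)) (hg : BddAbove (range g)) (h : ∀ i, |f i - g i| ≤ b) :
    |(⨆ i, f i) - ⨆ i, g i| ≤ b := by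
  rw [abs_le]
  have h1 : (⨆ i, f i) ≤ (⨆ i, g i) + b := ciSup_le fun i => by
    have h3 := (abs_le.mp (h i)).2
    have := le_ciSup hg i; linarith
  have h2 : (⨆ i, g i) ≤ (⨆ i, f i) + b := ciSup_le fun i => by
    have h3 := (abs_le.mp (h i)).1
    have := le_ciSup hf i; linarith
  constructor <;> linarith

/-- Time-Hölder regularity of Peng's discrete dynamic programming scheme. -/
theorem discrete_scheme_time_holder {ι : Type*} [Nonempty ι]
    (Ω : ι → Type*) [∀ i, MeasurableSpace (Ω i)]
    (μ : ∀ i, Measure (Ω i)) (hμ : ∀ i, IsProbabilityMeasure (μ i))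
    (ξ : ∀ i, Ω i → ℝ) (hmeas : ∀ i, Measurable (ξ i))
    (hξ2 : ∀ i, Integrable (fun ω => (ξ i ω) ^ 2) (μ i))
    (hcent : ∀ i, ∫ ω, ξ i ω ∂(μ i) = 0)
    (σu : ℝ) (hσu : 0 ≤ σu)
    (hvar : ∀ i, ∫ ω, (ξ i ω) ^ 2 ∂(μ i) ≤ σu ^ 2)
    (β : ℝ) (hβ0 : 0 < β) (hβ1 : β ≤ 1)
    (φ : ℝ → ℝ) (hφ : ∀ x y : ℝ, |φ x - φ y| ≤ |x - y| ^ β)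
    (n : ℕ) (hn : 1 ≤ n) (v : ℕ → ℝ → ℝ)
    (hterm : ∀ x, v n x = φ x)
    (hint : ∀ (k : ℕ) (i : ι) (x : ℝ),
      Integrable (fun ω => v (k + 1) (x + ξ i ω / Real.sqrt n)) (μ i))
    (hbdd : ∀ (k : ℕ) (x : ℝ),
      BddAbove (range fun i : ι => ∫ ω, v (k + 1) (x + ξ i ω / Real.sqrt n) ∂(μ i)))
    (hrec : ∀ k < n, ∀ x : ℝ,
      v k x = ⨆ i : ι, ∫ ω, v (k + 1) (x + ξ i ω / Real.sqrt n) ∂(μ i))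
 :
    ∀ s t : ℕ, s ≤ t → t ≤ n → ∀ x : ℝ,
      |v s x - v t x| ≤ σu ^ β * (((t : ℝ) - (s : ℝ)) / n) ^ (β / 2) := by
  have hn0 : (0:ℝ) < n := by exact_mod_cast Nat.pos_of_ne_zero (by omega)
  have hsq : Real.sqrt n ^ 2 = (n:ℝ) := Real.sq_sqrt hn0.le
  have hsn : (0:ℝ) < Real.sqrt n := Real.sqrt_pos.mpr hn0
  have hξint : ∀ i, Integrable (ξ i) (μ i) := fun i => by
    haveI := hμ i
    exact ((memLp_two_iff_integrable_sq (hmeas i).aestronglyMeasurable).mpr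
      (hξ2 i)).integrable one_le_two
  -- expansion of the square
  have hexp : ∀ (c r : ℝ), (c + r / Real.sqrt n) ^ 2
      = c ^ 2 + (2 * c / Real.sqrt n) * r + r ^ 2 * (1 / n) := by
    intro c r
    have h1 : (c + r / Real.sqrt n) ^ 2
        = c ^ 2 + 2 * c * (r / Real.sqrt n) + (r / Real.sqrt n) ^ 2 := by ring
    rw [h1, div_pow, hsq]
    ring
  -- integrability of the square
  have hmomI : ∀ (i : ι) (c : ℝ),
      Integrable (fun ω => (c + ξ i ω / Real.sqrt n) ^ 2) (μ i) := by
    intro i c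
    haveI := hμ i
    have : (fun ω => (c + ξ i ω / Real.sqrt n) ^ 2)
        = fun ω => c ^ 2 + (2 * c / Real.sqrt n) * ξ i ω + ξ i ω ^ 2 * (1 / n) := by
      funext ω; exact hexp c (ξ i ω)
    rw [this]
    exact ((integrable_const _).add ((hξint i).const_mul _)).add ((hξ2 i).mul_const _)
  -- second moment bound
  have hmomB : ∀ (i : ι) (c : ℝ),
      ∫ ω, (c + ξ i ω / Real.sqrt n) ^ 2 ∂(μ i) ≤ c ^ 2 + σu ^ 2 / n := by
    intro i c
    haveI := hμ i
    have heq : (fun ω => (c + ξ i ω / Real.sqrt n) ^ 2)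
        = fun ω => c ^ 2 + (2 * c / Real.sqrt n) * ξ i ω + ξ i ω ^ 2 * (1 / n) := by
      funext ω; exact hexp c (ξ i ω)
    have hIc : Integrable (fun ω => (2 * c / Real.sqrt n) * ξ i ω) (μ i) :=
      (hξint i).const_mul _
    have hIa : Integrable (fun ω => c ^ 2 + (2 * c / Real.sqrt n) * ξ i ω) (μ i) :=
      (integrable_const _).add hIc
    have hIb : Integrable (fun ω => ξ i ω ^ 2 * (1 / (n:ℝ))) (μ i) :=
      (hξ2 i).mul_const _
    rw [heq, integral_add hIa hIb,
      integral_add (integrable_const _) hIc,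
      integral_const, integral_const_mul _ _, integral_mul_const _ _, hcent i]
    simp only [measure_univ, ENNReal.toReal_one, probReal_univ, one_smul, mul_zero, add_zero]
    have := hvar i
    have : (∫ ω, ξ i ω ^ 2 ∂(μ i)) * (1 / n) ≤ σu ^ 2 * (1 / n) := by
      apply mul_le_mul_of_nonneg_right (hvar i); positivity
    have h2 : σu ^ 2 * (1 / (n:ℝ)) = σu ^ 2 / n := by ring
    linarith [this, h2.le]
  -- spatial Hölder regularity
  have hspace : ∀ m k, k + m = n → ∀ x y : ℝ, |v k x - v k y| ≤ |x - y| ^ β := by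
    intro m
    induction m with
    | zero =>
      intro k hk x y
      have : k = n := by omega
      subst this
      rw [hterm, hterm]; exact hφ x y
    | succ m ih =>
      intro k hk x y
      have hkn : k < n := by omega
      rw [hrec k hkn x, hrec k hkn y]
      refine csupr_abs_sub_csupr _ _ _ (hbdd k x) (hbdd k y) fun i => ?_
      haveI := hμ i
      rw [← integral_sub (hint k i x) (hint k i y)]
      have habs := norm_integral_le_integral_norm (μ := μ i)
        (fun ω => v (k+1) (x + ξ i ω / Real.sqrt n) - v (k+1) (y + ξ i ω / Real.sqrt n))
      simp only [Real.norm_eq_abs] at habs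
      refine le_trans habs ?_
      have hmono : ∫ ω, |v (k+1) (x + ξ i ω / Real.sqrt n)
            - v (k+1) (y + ξ i ω / Real.sqrt n)| ∂(μ i)
          ≤ ∫ _ω, |x - y| ^ β ∂(μ i) := by
        refine integral_mono (((hint k i x).sub (hint k i y)).abs) (integrable_const _)
          fun ω => ?_
        have h1 := ih (k+1) (by omega) (x + ξ i ω / Real.sqrt n) (y + ξ i ω / Real.sqrt n)
        have h2 : x + ξ i ω / Real.sqrt n - (y + ξ i ω / Real.sqrt n) = x - y := by ring
        rwa [h2] at h1
      simpa using hmono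
  -- main inductive estimate
  have main : ∀ (t : ℕ), t ≤ n → ∀ (A B : ℝ), 0 ≤ A → 0 ≤ B →
      (∀ u : ℝ, 0 ≤ u → u ^ (β / 2) ≤ A + B * u) →
      ∀ (m k : ℕ), k + m = t → ∀ x y : ℝ,
        |v k x - v t y| ≤ A + B * ((x - y) ^ 2 + m * σu ^ 2 / n) := by
    intro t ht A B hA hB hAB m
    induction m with
    | zero =>
      intro k hk x y
      have : k = t := by omega
      subst this
      have h1 := hspace (n - k) k (by omega) x y
      have h2 : |x - y| ^ β = ((x - y) ^ 2) ^ (β / 2) := by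
        rw [← sq_abs, ← Real.rpow_natCast |x - y| 2, ← Real.rpow_mul (abs_nonneg _),
          show ((2:ℕ):ℝ) * (β / 2) = β by push_cast; ring]
      have h3 := hAB ((x - y) ^ 2) (sq_nonneg _)
      rw [h2] at h1
      simp only [Nat.cast_zero, zero_mul, zero_div, add_zero]
      linarith
    | succ m ih =>
      intro k hk x y
      have hkn : k < n := by omega
      rw [hrec k hkn x]
      refine csupr_abs_sub_const _ _ _ (hbdd k x) fun i => ?_
      haveI := hμ i
      set c : ℝ := x - y with hc
      have hconst : ∫ _ω, v t y ∂(μ i) = v t y := by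
        rw [integral_const]; simp
      rw [show (∫ ω, v (k+1) (x + ξ i ω / Real.sqrt n) ∂(μ i)) - v t y
          = ∫ ω, (v (k+1) (x + ξ i ω / Real.sqrt n) - v t y) ∂(μ i) by
        rw [integral_sub (hint k i x) (integrable_const _), hconst]]
      have habs := norm_integral_le_integral_norm (μ := μ i)
        (fun ω => v (k+1) (x + ξ i ω / Real.sqrt n) - v t y)
      simp only [Real.norm_eq_abs] at habs
      refine le_trans habs ?_
      have hgI : Integrable (fun ω => A + B * ((c + ξ i ω / Real.sqrt n) ^ 2
          + m * σu ^ 2 / n)) (μ i) :=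
        (integrable_const _).add (((hmomI i c).add (integrable_const _)).const_mul _)
      have hmono : ∫ ω, |v (k+1) (x + ξ i ω / Real.sqrt n) - v t y| ∂(μ i)
          ≤ ∫ ω, (A + B * ((c + ξ i ω / Real.sqrt n) ^ 2 + m * σu ^ 2 / n)) ∂(μ i) := by
        refine integral_mono (((hint k i x).sub (integrable_const _)).abs) hgI fun ω => ?_
        have h1 := ih (k+1) (by omega) (x + ξ i ω / Real.sqrt n) y
        have h2 : x + ξ i ω / Real.sqrt n - y = c + ξ i ω / Real.sqrt n := by
          rw [hc]; ring
        rwa [h2] at h1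
      refine le_trans hmono ?_
      have hgI2 : Integrable (fun ω => B * ((c + ξ i ω / Real.sqrt n) ^ 2
          + m * σu ^ 2 / n)) (μ i) :=
        (((hmomI i c).add (integrable_const _)).const_mul _)
      have hgI3 : Integrable (fun ω => (c + ξ i ω / Real.sqrt n) ^ 2
          + (m:ℝ) * σu ^ 2 / n) (μ i) :=
        (hmomI i c).add (integrable_const _)
      rw [integral_add (integrable_const _) hgI2,
        integral_const_mul _ _, integral_add (hmomI i c) (integrable_const _),
        integral_const, integral_const]
      simp only [measure_univ, ENNReal.toReal_one, probReal_univ, one_smul]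
      have h3 := hmomB i c
      have h4 : ((m : ℝ) + 1) * σu ^ 2 / n = m * σu ^ 2 / n + σu ^ 2 / n := by ring
      have h5 : ((m + 1 : ℕ) : ℝ) = (m : ℝ) + 1 := by push_cast; ring
      rw [h5, h4]
      nlinarith [hB, h3]
  -- conclusion
  intro s t hst htn x
  have hcast : ((t:ℝ) - (s:ℝ)) = ((t - s : ℕ) : ℝ) := by
    rw [Nat.cast_sub hst]
  set m : ℕ := t - s with hm
  set u₀ : ℝ := (m : ℝ) * σu ^ 2 / n with hu₀def
  have hu₀nn : 0 ≤ u₀ := by positivity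
  have hks : s + m = t := by omega
  have hRHS : σu ^ β * (((t : ℝ) - (s : ℝ)) / n) ^ (β / 2) = u₀ ^ (β / 2) := by
    rw [hcast]
    have h1 : u₀ = σu ^ 2 * ((m : ℝ) / n) := by rw [hu₀def]; ring
    rw [h1, Real.mul_rpow (sq_nonneg _) (by positivity),
      ← Real.rpow_natCast σu 2, ← Real.rpow_mul hσu,
      show ((2:ℕ):ℝ) * (β / 2) = β by push_cast; ring]
  rw [hRHS]
  by_cases hpos : 0 < u₀
  · have hB : (0:ℝ) ≤ (β / 2) * u₀ ^ (β / 2 - 1) := by positivity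
    have hA : (0:ℝ) ≤ (1 - β / 2) * u₀ ^ (β / 2) := by
      apply mul_nonneg (by linarith) (Real.rpow_nonneg hu₀nn _)
    have h := main t htn _ _ hA hB
      (fun u hu => tangent_rpow hβ0 hβ1 hpos hu) m s hks x x
    have h2 : (x - x) ^ 2 = 0 := by ring
    rw [h2, zero_add, ← hu₀def] at h
    have h3 : (1 - β / 2) * u₀ ^ (β / 2) + β / 2 * u₀ ^ (β / 2 - 1) * u₀
        = u₀ ^ (β / 2) := by
      have hmul : u₀ ^ (β / 2 - 1) * u₀ = u₀ ^ (β / 2) := by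
        rw [Real.rpow_sub hpos, Real.rpow_one]
        field_simp
      nlinarith [hmul]
    calc |v s x - v t x| ≤ (1 - β / 2) * u₀ ^ (β / 2)
          + (β / 2) * u₀ ^ (β / 2 - 1) * u₀ := h
      _ = u₀ ^ (β / 2) := h3
  · have hu₀ : u₀ = 0 := le_antisymm (not_lt.mp hpos) hu₀nn
    have hLHS : |v s x - v t x| ≤ 0 := by
      refine le_of_forall_pos_le_add fun ε hε => ?_
      set w : ℝ := ε ^ (2 / β) with hw
      have hwpos : 0 < w := Real.rpow_pos_of_pos hε _
      have hB : (0:ℝ) ≤ (β / 2) * w ^ (β / 2 - 1) := by positivity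
      have hA : (0:ℝ) ≤ (1 - β / 2) * w ^ (β / 2) := by
        apply mul_nonneg (by linarith) (Real.rpow_nonneg hwpos.le _)
      have h := main t htn _ _ hA hB
        (fun u hu => tangent_rpow hβ0 hβ1 hwpos hu) m s hks x x
      have h2 : (x - x) ^ 2 + (m:ℝ) * σu ^ 2 / n = 0 := by
        rw [← hu₀def]; rw [hu₀]; ring
      rw [h2, mul_zero, add_zero] at h
      have h3 : (1 - β / 2) * w ^ (β / 2) ≤ w ^ (β / 2) := by
        nlinarith [Real.rpow_nonneg hwpos.le (β / 2), hβ0]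
      have h4 : w ^ (β / 2) = ε := by
        rw [hw, ← Real.rpow_mul hε.le]
        rw [show 2 / β * (β / 2) = 1 by field_simp]
        exact Real.rpow_one ε
      rw [zero_add]
      calc |v s x - v t x| ≤ (1 - β/2) * w ^ (β/2) := h
        _ ≤ w ^ (β/2) := h3
        _ = ε := h4
    have hRHSnn : 0 ≤ u₀ ^ (β / 2) := Real.rpow_nonneg hu₀nn _
    linarith
end

section
/- With $v(t,x) = \sup_{\sigma_\cdot \in \Sigma} E\,\phi\big(x + \int_t^1 \sigma_r\, dw_r\big)$ as above ($\phi$ $\beta$-Hölder with constant 1, $\sigma$-processes valued in $[\underline\sigma, \bar\sigma]$), for all $s, t \in [0,1]$ and $x \in \mathbb{R}$: $|v(t,x) - v(s,x)| \leq \bar\sigma^{\beta} |t-s|^{\beta/2}$. -/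
open MeasureTheory Set

/-- Time-Hölder regularity of the value function via the Bellman principle.
Here `S` is the abstract set of controls, `X σ s t` is the stochastic integral
`∫_s^t σ_r dw_r` (centered, with `E X² ≤ σ̄²(t-s)` by the Itô isometry), and the
dynamic programming principle `hbell` is assumed. -/
theorem value_function_time_holder {Ω : Type*} [MeasurableSpace Ω]
    (P : Measure Ω) [IsProbabilityMeasure P]
    {S : Type*} [Nonempty S] (X : S → ℝ → ℝ → Ω → ℝ)
    (σu β : ℝ) (hσu : 0 ≤ σu) (hβ0 : 0 < β) (hβ1 : β ≤ 1)
    (hXmeas : ∀ (σ : S) (s t : ℝ), Measurable (X σ s t))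
    (hX2 : ∀ (σ : S) (s t : ℝ), Integrable (fun ω => (X σ s t ω) ^ 2) P)
    (hiso : ∀ (σ : S) (s t : ℝ), 0 ≤ s → s ≤ t → t ≤ 1 →
      ∫ ω, (X σ s t ω) ^ 2 ∂P ≤ σu ^ 2 * (t - s))
    (v : ℝ → ℝ → ℝ)
    (hvx : ∀ t ∈ Icc (0 : ℝ) 1, ∀ x y : ℝ, |v t x - v t y| ≤ |x - y| ^ β)
    (hvint : ∀ (σ : S) (s t x : ℝ), Integrable (fun ω => v t (x + X σ s t ω)) P)
    (hvbdd : ∀ s t x : ℝ, BddAbove (range fun σ : S => ∫ ω, v t (x + X σ s t ω) ∂P))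
    (hbell : ∀ s t : ℝ, 0 ≤ s → s ≤ t → t ≤ 1 → ∀ x : ℝ,
      v s x = ⨆ σ : S, ∫ ω, v t (x + X σ s t ω) ∂P) :
    ∀ s ∈ Icc (0 : ℝ) 1, ∀ t ∈ Icc (0 : ℝ) 1, ∀ x : ℝ,
      |v t x - v s x| ≤ σu ^ β * |t - s| ^ (β / 2) := by
  have hβ2 : 0 < β / 2 := by linarith
  have hβ2' : β / 2 ≤ 1 := by linarith
  -- main claim for s ≤ t
  have key : ∀ s ∈ Icc (0 : ℝ) 1, ∀ t ∈ Icc (0 : ℝ) 1, s ≤ t → ∀ x : ℝ,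
      |v t x - v s x| ≤ σu ^ β * (t - s) ^ (β / 2) := by
    intro s hs t ht hst x
    set C : ℝ := σu ^ β * (t - s) ^ (β / 2) with hC
    have hC0 : 0 ≤ C := by
      apply mul_nonneg (Real.rpow_nonneg hσu _) (Real.rpow_nonneg (by linarith) _)
    -- the per-control estimate
    have hσbd : ∀ σ : S, |(∫ ω, v t (x + X σ s t ω) ∂P) - v t x| ≤ C := by
      intro σ
      have hXm := hXmeas σ s t
      -- integrability of (X²)^(β/2)
      have hmeas : Measurable (fun ω => (X σ s t ω ^ 2) ^ (β / 2)) :=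
        (Real.continuous_rpow_const hβ2.le).measurable.comp (hXm.pow_const 2)
      have hintp : Integrable (fun ω => (X σ s t ω ^ 2) ^ (β / 2)) P := by
        refine Integrable.mono ((integrable_const (1 : ℝ)).add (hX2 σ s t))
          hmeas.aestronglyMeasurable (Filter.Eventually.of_forall fun ω => ?_)
        have hx2 : (0 : ℝ) ≤ X σ s t ω ^ 2 := sq_nonneg _
        simp only [Pi.add_apply]
        rw [Real.norm_eq_abs, Real.norm_eq_abs, abs_of_nonneg (Real.rpow_nonneg hx2 _),
          abs_of_nonneg (by positivity)]
        rcases le_total (X σ s t ω ^ 2) 1 with h1 | h1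
        · have := Real.rpow_le_one hx2 h1 hβ2.le
          nlinarith [sq_nonneg (X σ s t ω)]
        · have := Real.rpow_le_rpow_of_exponent_le h1 hβ2'
          rw [Real.rpow_one] at this
          linarith
      -- pointwise Hölder bound
      have hpt : ∀ ω, |v t (x + X σ s t ω) - v t x| ≤ (X σ s t ω ^ 2) ^ (β / 2) := by
        intro ω
        have h1 := hvx t ht (x + X σ s t ω) x
        have h2 : |x + X σ s t ω - x| = |X σ s t ω| := by ring_nf
        rw [h2] at h1
        have h3 : (X σ s t ω ^ 2) ^ (β / 2) = |X σ s t ω| ^ β := by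
          rw [← sq_abs, ← Real.rpow_natCast |X σ s t ω| 2, ← Real.rpow_mul (abs_nonneg _)]
          congr 1; ring
        rw [h3]; exact h1
      -- step 1: |∫ v - v t x| ≤ ∫ |v - v t x|
      have e1 : (∫ ω, v t (x + X σ s t ω) ∂P) - v t x
          = ∫ ω, (v t (x + X σ s t ω) - v t x) ∂P := by
        rw [integral_sub (hvint σ s t x) (integrable_const _), integral_const]
        simp
      have hintsub : Integrable (fun ω => v t (x + X σ s t ω) - v t x) P :=
        (hvint σ s t x).sub (integrable_const _)
      have e2 : |∫ ω, (v t (x + X σ s t ω) - v t x) ∂P|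
          ≤ ∫ ω, (X σ s t ω ^ 2) ^ (β / 2) ∂P := by
        calc |∫ ω, (v t (x + X σ s t ω) - v t x) ∂P|
            ≤ ∫ ω, |v t (x + X σ s t ω) - v t x| ∂P := by
              simpa using norm_integral_le_integral_norm (fun ω => v t (x + X σ s t ω) - v t x) (μ := P)
          _ ≤ ∫ ω, (X σ s t ω ^ 2) ^ (β / 2) ∂P := integral_mono hintsub.abs hintp hpt
      -- step 2: Jensen
      have e3 : ∫ ω, (X σ s t ω ^ 2) ^ (β / 2) ∂P
          ≤ (∫ ω, X σ s t ω ^ 2 ∂P) ^ (β / 2) := by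
        refine ConcaveOn.le_map_integral (Real.concaveOn_rpow hβ2.le hβ2')
          ?_ isClosed_Ici (Filter.Eventually.of_forall fun ω => Set.mem_Ici.2 (sq_nonneg _))
          (hX2 σ s t) ?_
        · exact (Real.continuous_rpow_const hβ2.le).continuousOn
        · exact hintp
      -- step 3: isometry bound
      have hEX2 : 0 ≤ ∫ ω, X σ s t ω ^ 2 ∂P :=
        integral_nonneg fun ω => sq_nonneg _
      have e4 : (∫ ω, X σ s t ω ^ 2 ∂P) ^ (β / 2) ≤ (σu ^ 2 * (t - s)) ^ (β / 2) :=
        Real.rpow_le_rpow hEX2 (hiso σ s t hs.1 hst ht.2) hβ2.le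
      have e5 : (σu ^ 2 * (t - s)) ^ (β / 2) = C := by
        rw [Real.mul_rpow (by positivity) (by linarith), hC]
        congr 1
        rw [← Real.rpow_natCast σu 2, ← Real.rpow_mul hσu]
        congr 1; ring
      calc |(∫ ω, v t (x + X σ s t ω) ∂P) - v t x|
          = |∫ ω, (v t (x + X σ s t ω) - v t x) ∂P| := by rw [e1]
        _ ≤ ∫ ω, (X σ s t ω ^ 2) ^ (β / 2) ∂P := e2
        _ ≤ (∫ ω, X σ s t ω ^ 2 ∂P) ^ (β / 2) := e3
        _ ≤ (σu ^ 2 * (t - s)) ^ (β / 2) := e4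
        _ = C := e5
    -- combine via the Bellman identity
    rw [hbell s t hs.1 hst ht.2 x, abs_sub_comm]
    rw [abs_le]
    constructor
    · obtain ⟨σ₀⟩ := ‹Nonempty S›
      have h := le_ciSup (hvbdd s t x) σ₀
      have := (abs_le.1 (hσbd σ₀)).1
      linarith
    · have hub : ∀ σ : S, (∫ ω, v t (x + X σ s t ω) ∂P) ≤ v t x + C := fun σ => by
        have := (abs_le.1 (hσbd σ)).2; linarith
      have h := ciSup_le hub
      linarith
  intro s hs t ht x
  rcases le_total s t with hst | hst
  · have h := key s hs t ht hst x
    have habs : |t - s| = t - s := abs_of_nonneg (by linarith)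
    rw [habs]; exact h
  · have h := key t ht s hs hst x
    have habs : |t - s| = s - t := by
      rw [abs_sub_comm]; exact abs_of_nonneg (by linarith)
    rw [habs, abs_sub_comm]; exact h
end

section
/- Let $v : [0,1]\times\mathbb{R} \to \mathbb{R}$ be such that for every constant $\sigma \in [\underline\sigma, \bar\sigma]$, every $t, \delta \geq 0$ with $t + \delta \leq 1$, and every $x$: $v(t,x) \geq E\, v(t+\delta, x + \sigma w_{\delta})$, where $w_\delta$ is a centered Gaussian with variance $\delta$. Suppose $v$ is $C^{1,2}$ on $[0,T]\times\mathbb{R}$ with continuous $\partial_t v$ and $D^2 v$, for some $T < 1$. Then on $[0,T]\times\mathbb{R}$, $\partial_t v + \tfrac12 \sigma^2 D^2 v \leq 0$ for every $\sigma \in [\underline\sigma, \bar\sigma]$. -/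
open MeasureTheory Set ProbabilityTheory Filter
open scoped ENNReal NNReal Real Topology

lemma aux_lip {f f' : ℝ → ℝ} {C : ℝ} (hf : ∀ u, HasDerivAt f (f' u) u)
    (hb : ∀ u, |f' u| ≤ C) (a b : ℝ) : |f b - f a| ≤ C * |b - a| := by
  have := Convex.norm_image_sub_le_of_norm_hasDerivWithin_le
    (fun u (_ : u ∈ (univ : Set ℝ)) => (hf u).hasDerivWithinAt)
    (fun u (_ : u ∈ (univ : Set ℝ)) => by simpa [Real.norm_eq_abs] using hb u)
    convex_univ (mem_univ a) (mem_univ b)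
  simpa [Real.norm_eq_abs] using this

lemma aux_lip_loc {f f' : ℝ → ℝ} {C a b : ℝ} (hf : ∀ u, HasDerivAt f (f' u) u)
    (hb : ∀ u ∈ Icc (min a b) (max a b), |f' u| ≤ C) : |f b - f a| ≤ C * |b - a| := by
  have := Convex.norm_image_sub_le_of_norm_hasDerivWithin_le
    (fun u (_ : u ∈ Icc (min a b) (max a b)) => (hf u).hasDerivWithinAt)
    (fun u hu => by simpa [Real.norm_eq_abs] using hb u hu) (convex_Icc _ _)
    ⟨min_le_left a b, le_max_left a b⟩ ⟨min_le_right a b, le_max_right a b⟩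
  simpa [Real.norm_eq_abs] using this

lemma aux_taylor1 {f f' : ℝ → ℝ} (hf : ∀ u, HasDerivAt f (f' u) u) (a b ε : ℝ)
    (hε : ∀ u ∈ Icc (min a b) (max a b), |f' u - f' a| ≤ ε) :
    |f b - f a - f' a * (b - a)| ≤ ε * |b - a| := by
  have hg : ∀ u, HasDerivAt (fun u => f u - f' a * u) (f' u - f' a) u := fun u =>
    (hf u).sub (by simpa using (hasDerivAt_id u).const_mul (f' a))
  have h := aux_lip_loc (a := a) (b := b) hg hε
  have heq : f b - f' a * b - (f a - f' a * a) = f b - f a - f' a * (b - a) := by ring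
  rwa [heq] at h

lemma aux_abs_mem {x b u : ℝ} (hu : u ∈ Icc (min x b) (max x b)) : |u - x| ≤ |b - x| := by
  rcases le_total x b with h | h
  · rw [min_eq_left h, max_eq_right h] at hu
    rw [abs_of_nonneg (by linarith [hu.1]), abs_of_nonneg (by linarith)]
    linarith [hu.2]
  · rw [min_eq_right h, max_eq_left h] at hu
    rw [abs_of_nonpos (by linarith [hu.2]), abs_of_nonpos (by linarith)]
    linarith [hu.1]

lemma aux_integral_gauss (g : ℝ → ℝ) :
    ∫ z, g z ∂(gaussianReal 0 1) = ∫ z, gaussianPDFReal 0 1 z * g z := by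
  rw [gaussianReal_of_var_ne_zero 0 one_ne_zero]
  have h1 : gaussianPDF 0 1 = fun z => ((gaussianPDFReal 0 1 z).toNNReal : ℝ≥0∞) := rfl
  rw [h1, integral_withDensity_eq_integral_smul
    ((measurable_gaussianPDFReal 0 1).real_toNNReal) g]
  refine integral_congr_ae (Eventually.of_forall fun z => ?_)
  simp [NNReal.smul_def, Real.coe_toNNReal _ (gaussianPDFReal_nonneg 0 1 z)]

lemma aux_pdf_eq : gaussianPDFReal 0 1 =
    fun z => (Real.sqrt (2 * Real.pi))⁻¹ * (Real.exp (-(1/2) * z ^ 2)) := by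
  funext z
  simp only [gaussianPDFReal, NNReal.coe_one, mul_one, sub_zero]
  congr 1
  ring_nf

lemma aux_rpow_two (x : ℝ) : x ^ (2 : ℝ) = x ^ 2 := by
  rw [show (2 : ℝ) = ((2 : ℕ) : ℝ) by norm_num, Real.rpow_natCast]

lemma aux_integrable_pdf_sq :
    Integrable (fun z : ℝ => gaussianPDFReal 0 1 z * z ^ 2) := by
  have h := (integrable_rpow_mul_exp_neg_mul_sq (b := 1/2) (by norm_num) (s := 2)
    (by norm_num)).const_mul ((Real.sqrt (2 * Real.pi))⁻¹)
  simp only [aux_rpow_two] at h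
  refine h.congr (Eventually.of_forall fun z => ?_)
  rw [aux_pdf_eq]
  ring_nf

lemma aux_integrable_sq : Integrable (fun z : ℝ => z ^ 2) (gaussianReal 0 1) := by
  rw [gaussianReal_of_var_ne_zero 0 one_ne_zero]
  have h1 : gaussianPDF 0 1 = fun z => ((gaussianPDFReal 0 1 z).toNNReal : ℝ≥0∞) := rfl
  rw [h1, integrable_withDensity_iff_integrable_smul
    ((measurable_gaussianPDFReal 0 1).real_toNNReal)]
  refine aux_integrable_pdf_sq.congr (Eventually.of_forall fun z => ?_)
  simp [NNReal.smul_def, Real.coe_toNNReal _ (gaussianPDFReal_nonneg 0 1 z)]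

lemma aux_integral_sq : ∫ z, z ^ 2 ∂(gaussianReal 0 1) = 1 := by
  rw [aux_integral_gauss]
  have heq : (fun z : ℝ => gaussianPDFReal 0 1 z * z ^ 2)
      = fun z : ℝ => (Real.sqrt (2 * Real.pi))⁻¹ * (|z| ^ (2:ℝ) * Real.exp (-(1/2) * |z| ^ (2:ℝ))) := by
    funext z
    rw [aux_pdf_eq]
    simp only [aux_rpow_two, sq_abs]
    ring
  rw [heq]
  rw [show (∫ z : ℝ, (Real.sqrt (2 * Real.pi))⁻¹ * (|z| ^ (2:ℝ) * Real.exp (-(1/2) * |z| ^ (2:ℝ))))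
      = 2 * ∫ x in Ioi (0:ℝ), (Real.sqrt (2 * Real.pi))⁻¹ * (x ^ (2:ℝ) * Real.exp (-(1/2) * x ^ (2:ℝ)))
      from integral_comp_abs (f := fun y : ℝ => (Real.sqrt (2 * Real.pi))⁻¹ * (y ^ (2:ℝ) * Real.exp (-(1/2) * y ^ (2:ℝ))))]
  rw [MeasureTheory.integral_const_mul]
  rw [integral_rpow_mul_exp_neg_mul_rpow (by norm_num) (by norm_num) (by norm_num)]
  have hG : Real.Gamma (((2:ℝ) + 1) / 2) = Real.sqrt Real.pi / 2 := by
    rw [show ((2:ℝ) + 1) / 2 = 1/2 + 1 by norm_num, Real.Gamma_add_one (by norm_num),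
      Real.Gamma_one_half_eq]
    ring
  have hpow : ((1:ℝ)/2) ^ (-((2:ℝ) + 1) / 2) = 2 * Real.sqrt 2 := by
    rw [show ((1:ℝ)/2) = 2⁻¹ by norm_num,
      Real.inv_rpow (by norm_num), show (-((2:ℝ) + 1) / 2) = -(3/2) by norm_num,
      Real.rpow_neg (by norm_num), inv_inv,
      show ((3:ℝ)/2) = 1 + 1/2 by norm_num, Real.rpow_add (by norm_num), Real.rpow_one,
      ← Real.sqrt_eq_rpow]
  rw [hG, hpow, Real.sqrt_mul (by norm_num)]
  have h2 : Real.sqrt 2 > 0 := Real.sqrt_pos.mpr (by norm_num)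
  have hp : Real.sqrt Real.pi > 0 := Real.sqrt_pos.mpr Real.pi_pos
  field_simp

lemma aux_integrable_id : Integrable (fun z : ℝ => z) (gaussianReal 0 1) := by
  refine (aux_integrable_sq.add (integrable_const 1)).mono'
    measurable_id.aestronglyMeasurable (Eventually.of_forall fun z => ?_)
  simp only [Real.norm_eq_abs, Pi.add_apply]
  nlinarith [sq_nonneg (|z| - 1), abs_nonneg z, sq_abs z]

lemma aux_integral_id : ∫ z, z ∂(gaussianReal 0 1) = 0 := by
  have hmap : (gaussianReal 0 1).map (fun z => (-1 : ℝ) * z) = gaussianReal 0 1 := by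
    have h := gaussianReal_map_const_mul (μ := 0) (v := 1) (-1 : ℝ)
    rw [h]
    congr 1
    · simp
    · ext; simp
  have h : ∫ z, z ∂(gaussianReal 0 1) = ∫ z, (-1 : ℝ) * z ∂(gaussianReal 0 1) := by
    conv_lhs => rw [← hmap]
    exact integral_map (f := fun z : ℝ => z) (measurable_const_mul (-1:ℝ)).aemeasurable
      measurable_id.aestronglyMeasurable
  simp only [neg_one_mul] at h
  rw [integral_neg] at h
  linarith

set_option maxHeartbeats 1000000

/-- A smooth (`C^{1,2}`, bounded) function satisfying the Bellman supersolution
inequality `v(t,x) ≥ E v(t+δ, x + σ w_δ)` against Gaussian increments, for all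
constant `σ ∈ [σ̲, σ̄]`, satisfies `∂_t v + ½ σ² D² v ≤ 0` on `[0,T] × ℝ`. -/
theorem supersolution_differential_inequality (σl σu T : ℝ) (hT0 : 0 ≤ T) (hT1 : T < 1)
    (v vt vx vxx : ℝ → ℝ → ℝ)
    (hvt : ∀ t x : ℝ, HasDerivAt (fun s => v s x) (vt t x) t)
    (hvx : ∀ t x : ℝ, HasDerivAt (fun y => v t y) (vx t x) x)
    (hvxx : ∀ t x : ℝ, HasDerivAt (fun y => vx t y) (vxx t x) x)
    (hct : Continuous (Function.uncurry vt))
    (hcxx : Continuous (Function.uncurry vxx))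
    (hbd : ∃ C : ℝ, ∀ t x : ℝ, |v t x| + |vt t x| + |vx t x| + |vxx t x| ≤ C)
    (hsuper : ∀ σ ∈ Icc σl σu, ∀ t δ x : ℝ, 0 ≤ t → 0 ≤ δ → t + δ ≤ 1 →
      (∫ y, v (t + δ) (x + σ * y) ∂(gaussianReal 0 δ.toNNReal)) ≤ v t x) :
    ∀ σ ∈ Icc σl σu, ∀ t ∈ Icc (0 : ℝ) T, ∀ x : ℝ,
      vt t x + σ ^ 2 / 2 * vxx t x ≤ 0 := by
  obtain ⟨C, hC⟩ := hbd
  have hCv : ∀ s y, |v s y| ≤ C := fun s y => by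
    have h := hC s y
    have h1 := abs_nonneg (vt s y); have h2 := abs_nonneg (vx s y)
    have h3 := abs_nonneg (vxx s y); linarith
  have hCt : ∀ s y, |vt s y| ≤ C := fun s y => by
    have h := hC s y
    have h1 := abs_nonneg (v s y); have h2 := abs_nonneg (vx s y)
    have h3 := abs_nonneg (vxx s y); linarith
  have hCxx : ∀ s y, |vxx s y| ≤ C := fun s y => by
    have h := hC s y
    have h1 := abs_nonneg (v s y); have h2 := abs_nonneg (vx s y)
    have h3 := abs_nonneg (vt s y); linarith
  have hC0 : 0 ≤ C := le_trans (abs_nonneg _) (hCv 0 0)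
  intro σ hσ t ht x
  have ht0 : 0 ≤ t := ht.1
  have ht1 : t < 1 := lt_of_le_of_lt ht.2 hT1
  have hvcont : ∀ s, Continuous (fun y => v s y) :=
    fun s => continuous_iff_continuousAt.2 fun y => (hvx s y).continuousAt
  set γ : Measure ℝ := gaussianReal 0 1 with hγ
  set φ : ℝ → ℝ → ℝ := fun δ z =>
    (v (t + δ) (x + σ * (Real.sqrt δ * z)) - v t x
      - vx t x * (σ * (Real.sqrt δ * z))) / δ with hφdef
  -- change of variables
  have hchg : ∀ δ : ℝ, 0 < δ →
      ∫ z, φ δ z ∂γ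
        = ((∫ y, v (t + δ) (x + σ * y) ∂(gaussianReal 0 δ.toNNReal)) - v t x) / δ := by
    intro δ hδ
    have hmap : γ.map (fun z => Real.sqrt δ * z) = gaussianReal 0 δ.toNNReal := by
      have h := gaussianReal_map_const_mul (μ := 0) (v := 1) (Real.sqrt δ)
      rw [h]
      congr 1
      · simp
      · ext; simp [Real.sq_sqrt hδ.le, Real.coe_toNNReal _ hδ.le]
    have hcont : Continuous (fun y : ℝ => v (t + δ) (x + σ * y)) :=
      (hvcont (t + δ)).comp (by continuity)
    have hchg1 : (∫ y, v (t + δ) (x + σ * y) ∂(gaussianReal 0 δ.toNNReal))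
        = ∫ z, v (t + δ) (x + σ * (Real.sqrt δ * z)) ∂γ := by
      rw [← hmap, integral_map (measurable_const_mul _).aemeasurable
        (by rw [hmap]; exact hcont.aestronglyMeasurable)]
    have hI1 : Integrable (fun z => v (t + δ) (x + σ * (Real.sqrt δ * z))) γ := by
      refine (integrable_const C).mono'
        ((hvcont (t + δ)).comp (by continuity)).aestronglyMeasurable
        (Eventually.of_forall fun z => ?_)
      simpa [Real.norm_eq_abs] using hCv _ _
    have hIid : Integrable (fun z : ℝ => vx t x * (σ * (Real.sqrt δ * z))) γ := by
      refine (aux_integrable_id.const_mul (vx t x * σ * Real.sqrt δ)).congr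
        (Eventually.of_forall fun z => by ring)
    have hzint : ∫ z : ℝ, vx t x * (σ * (Real.sqrt δ * z)) ∂γ = 0 := by
      have h : (fun z : ℝ => vx t x * (σ * (Real.sqrt δ * z)))
          = fun z : ℝ => (vx t x * σ * Real.sqrt δ) * z := by funext z; ring
      rw [h, integral_const_mul, hγ, aux_integral_id, mul_zero]
    have hI2 : Integrable (fun z => v (t + δ) (x + σ * (Real.sqrt δ * z)) - v t x) γ :=
      hI1.sub (integrable_const (v t x))
    calc ∫ z, φ δ z ∂γ
        = (∫ z, (v (t + δ) (x + σ * (Real.sqrt δ * z)) - v t x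
            - vx t x * (σ * (Real.sqrt δ * z))) ∂γ) / δ := by
          rw [hφdef]; exact integral_div δ _
      _ = ((∫ y, v (t + δ) (x + σ * y) ∂(gaussianReal 0 δ.toNNReal)) - v t x) / δ := by
          rw [integral_sub hI2 hIid,
            integral_sub hI1 (integrable_const (v t x)), integral_const, hzint, hchg1]
          simp
  -- uniform bound
  have hbound : ∀ δ : ℝ, 0 < δ → ∀ z : ℝ, |φ δ z| ≤ C + C * σ ^ 2 * z ^ 2 := by
    intro δ hδ z
    set b : ℝ := x + σ * (Real.sqrt δ * z) with hb
    have hbx : b - x = σ * (Real.sqrt δ * z) := by rw [hb]; ring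
    have hbx2 : (b - x) ^ 2 = σ ^ 2 * δ * z ^ 2 := by
      rw [hbx, mul_pow, mul_pow, Real.sq_sqrt hδ.le]
      ring
    have h1 : |v (t + δ) b - v t b| ≤ C * δ := by
      have h := aux_lip (f := fun s => v s b) (f' := fun s => vt s b)
        (fun u => hvt u b) (fun u => hCt u b) t (t + δ)
      rwa [show t + δ - t = δ by ring, abs_of_pos hδ] at h
    have hlipx : ∀ u, |vx t u - vx t x| ≤ C * |u - x| := fun u =>
      aux_lip (fun w => hvxx t w) (fun w => hCxx t w) x u
    have h2 : |v t b - v t x - vx t x * (b - x)| ≤ (C * |b - x|) * |b - x| := by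
      have hg : ∀ u, HasDerivAt (fun u => v t u - vx t x * u) (vx t u - vx t x) u :=
        fun u => (hvx t u).sub (by simpa using (hasDerivAt_id u).const_mul (vx t x))
      have h := aux_lip_loc (a := x) (b := b) hg (fun u hu =>
        le_trans (hlipx u) (mul_le_mul_of_nonneg_left (aux_abs_mem hu) hC0))
      have heq : v t b - vx t x * b - (v t x - vx t x * x)
          = v t b - v t x - vx t x * (b - x) := by ring
      rwa [heq] at h
    have hnum : |v (t + δ) b - v t x - vx t x * (σ * (Real.sqrt δ * z))|
        ≤ (C + C * σ ^ 2 * z ^ 2) * δ := by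
      rw [← hbx]
      have habs : |b - x| * |b - x| = (b - x) ^ 2 := by rw [← abs_mul, abs_of_nonneg] <;> nlinarith
      calc |v (t + δ) b - v t x - vx t x * (b - x)|
          ≤ |v (t + δ) b - v t b| + |v t b - v t x - vx t x * (b - x)| := by
            have := abs_add_le (v (t + δ) b - v t b) (v t b - v t x - vx t x * (b - x))
            have heq : v (t + δ) b - v t b + (v t b - v t x - vx t x * (b - x))
                = v (t + δ) b - v t x - vx t x * (b - x) := by ring
            rwa [heq] at this
        _ ≤ C * δ + (C * |b - x|) * |b - x| := add_le_add h1 h2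
        _ = C * δ + C * ((b - x) ^ 2) := by rw [mul_assoc, habs]
        _ = (C + C * σ ^ 2 * z ^ 2) * δ := by rw [hbx2]; ring
    rw [hφdef]
    simp only []
    rw [abs_div, abs_of_pos hδ, div_le_iff₀ hδ]
    exact hnum
  -- pointwise convergence
  have hptwise : ∀ z : ℝ, Tendsto (fun δ => φ δ z) (𝓝[>] (0:ℝ))
      (𝓝 (vt t x + σ ^ 2 / 2 * vxx t x * z ^ 2)) := by
    intro z
    rw [Metric.tendsto_nhdsWithin_nhds]
    intro ε hε
    have hε8 : 0 < ε / 8 := by linarith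
    obtain ⟨r1, hr1, hr1'⟩ := Metric.continuousAt_iff.mp
      (hct.continuousAt (x := ((t : ℝ), x))) (ε/8) hε8
    set ε2 : ℝ := ε / (2 * (σ ^ 2 * z ^ 2 + 1)) with hε2def
    have hz1 : (0:ℝ) < σ ^ 2 * z ^ 2 + 1 := by positivity
    have hε2 : 0 < ε2 := by rw [hε2def]; positivity
    obtain ⟨r2, hr2, hr2'⟩ := Metric.continuousAt_iff.mp
      (hcxx.continuousAt (x := ((t : ℝ), x))) ε2 hε2
    set M : ℝ := |σ * z| + 1 with hMdef
    have hM : 0 < M := by rw [hMdef]; positivity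
    set r : ℝ := min r1 r2 with hrdef
    have hr : 0 < r := lt_min hr1 hr2
    have hrr1 : r ≤ r1 := min_le_left _ _
    have hrr2 : r ≤ r2 := min_le_right _ _
    refine ⟨min r ((r / M) ^ 2), by positivity, ?_⟩
    intro δ hmem hdist
    have hδ : 0 < δ := hmem
    have hδr : δ < r := lt_of_lt_of_le (by
      rwa [Real.dist_eq, sub_zero, abs_of_pos hδ] at hdist) (min_le_left _ _)
    have hδr2 : δ < (r / M) ^ 2 := lt_of_lt_of_le (by
      rwa [Real.dist_eq, sub_zero, abs_of_pos hδ] at hdist) (min_le_right _ _)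
    set b : ℝ := x + σ * (Real.sqrt δ * z) with hbdef
    have hbx : b - x = σ * (Real.sqrt δ * z) := by rw [hbdef]; ring
    have hbx2 : (b - x) ^ 2 = σ ^ 2 * δ * z ^ 2 := by
      rw [hbx, mul_pow, mul_pow, Real.sq_sqrt hδ.le]
      ring
    have hbxr : |b - x| < r := by
      have hsq : Real.sqrt δ < r / M := by
        have h1 : Real.sqrt δ < Real.sqrt ((r / M) ^ 2) :=
          Real.sqrt_lt_sqrt hδ.le hδr2
        rwa [Real.sqrt_sq (by positivity)] at h1
      have : |b - x| = |σ * z| * Real.sqrt δ := by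
        rw [hbx, show σ * (Real.sqrt δ * z) = (σ * z) * Real.sqrt δ by ring, abs_mul,
          abs_of_nonneg (Real.sqrt_nonneg δ)]
      rw [this]
      calc |σ * z| * Real.sqrt δ ≤ M * Real.sqrt δ := by
            apply mul_le_mul_of_nonneg_right _ (Real.sqrt_nonneg δ)
            rw [hMdef]; linarith
        _ < M * (r / M) := by exact (mul_lt_mul_iff_right₀ hM).mpr hsq
        _ = r := by field_simp
    have hbxr1 : |b - x| < r1 := lt_of_lt_of_le hbxr (min_le_left _ _)
    have hbxr2 : |b - x| < r2 := lt_of_lt_of_le hbxr (min_le_right _ _)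
    -- A part
    have hvtbx : |vt t b - vt t x| < ε / 8 := by
      have hd : dist ((t : ℝ), b) ((t : ℝ), x) < r1 := by
        rw [Prod.dist_eq]
        exact max_lt (by simpa [Real.dist_eq] using hr1) (by rwa [Real.dist_eq])
      simpa [Function.uncurry, Real.dist_eq] using hr1' hd
    have hvtb : ∀ s ∈ Icc (min t (t + δ)) (max t (t + δ)), |vt s b - vt t b| ≤ ε / 4 := by
      intro s hs
      rw [min_eq_left (by linarith), max_eq_right (by linarith)] at hs
      have hst : |s - t| ≤ δ := by
        rw [abs_of_nonneg (by linarith [hs.1])]; linarith [hs.2]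
      have h1 : |vt s b - vt t x| < ε / 8 := by
        have hd : dist ((s : ℝ), b) ((t : ℝ), x) < r1 := by
          rw [Prod.dist_eq]
          exact max_lt (by rw [Real.dist_eq]; linarith [hst, hδr, hrr1]) (by rw [Real.dist_eq]; linarith [hbxr, hrr1])
        simpa [Function.uncurry, Real.dist_eq] using hr1' hd
      calc |vt s b - vt t b| ≤ |vt s b - vt t x| + |vt t x - vt t b| := abs_sub_le _ _ _
        _ ≤ ε / 8 + ε / 8 := by
            rw [abs_sub_comm (vt t x)]
            exact add_le_add h1.le hvtbx.le
        _ = ε / 4 := by ring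
    have htayA : |v (t + δ) b - v t b - vt t b * δ| ≤ (ε / 4) * δ := by
      have h := aux_taylor1 (f := fun s => v s b) (f' := fun s => vt s b)
        (fun u => hvt u b) t (t + δ) (ε / 4) hvtb
      rwa [show t + δ - t = δ by ring, abs_of_pos hδ] at h
    have hA : |(v (t + δ) b - v t b) / δ - vt t x| ≤ 3 * ε / 8 := by
      have hnum : |v (t + δ) b - v t b - vt t x * δ| ≤ (3 * ε / 8) * δ := by
        have heq : v (t + δ) b - v t b - vt t x * δ
            = (v (t + δ) b - v t b - vt t b * δ) + (vt t b - vt t x) * δ := by ring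
        rw [heq]
        calc |(v (t + δ) b - v t b - vt t b * δ) + (vt t b - vt t x) * δ|
            ≤ |v (t + δ) b - v t b - vt t b * δ| + |(vt t b - vt t x) * δ| := abs_add_le _ _
          _ ≤ (ε / 4) * δ + (ε / 8) * δ := by
              refine add_le_add htayA ?_
              rw [abs_mul, abs_of_pos hδ]
              exact mul_le_mul_of_nonneg_right hvtbx.le hδ.le
          _ = (3 * ε / 8) * δ := by ring
      rw [show (v (t + δ) b - v t b) / δ - vt t x
        = (v (t + δ) b - v t b - vt t x * δ) / δ by field_simp [hδ.ne']]
      rw [abs_div, abs_of_pos hδ, div_le_iff₀ hδ]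
      exact hnum
    -- B part
    have hvxxloc : ∀ u, |u - x| ≤ |b - x| → |vxx t u - vxx t x| ≤ ε2 := by
      intro u hu
      have hd : dist ((t : ℝ), u) ((t : ℝ), x) < r2 := by
        rw [Prod.dist_eq]
        refine max_lt (by simpa [Real.dist_eq] using hr2) ?_
        rw [Real.dist_eq]; exact lt_of_le_of_lt hu hbxr2
      exact le_of_lt (by simpa [Function.uncurry, Real.dist_eq] using hr2' hd)
    have htayx : ∀ u ∈ Icc (min x b) (max x b),
        |vx t u - vx t x - vxx t x * (u - x)| ≤ ε2 * |u - x| := fun u hu =>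
      aux_taylor1 (fun w => hvxx t w) x u ε2
        (fun w hw => hvxxloc w (le_trans (aux_abs_mem hw) (aux_abs_mem hu)))
    have hG : ∀ u, HasDerivAt (fun u => v t u - vx t x * u - vxx t x / 2 * (u - x) ^ 2)
        (vx t u - vx t x - vxx t x * (u - x)) u := by
      intro u
      have h1 : HasDerivAt (fun u : ℝ => (u - x) ^ 2) (2 * (u - x)) u := by
        have := ((hasDerivAt_id' u).sub_const x).fun_pow 2
        simpa using this
      have h2 : HasDerivAt (fun u : ℝ => vxx t x / 2 * (u - x) ^ 2)
          (vxx t x / 2 * (2 * (u - x))) u := h1.const_mul _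
      have h3 := ((hvx t u).fun_sub (by
        simpa using (hasDerivAt_id u).const_mul (vx t x))).fun_sub h2
      refine h3.congr_deriv ?_
      ring
    have hB2 : |v t b - v t x - vx t x * (b - x) - vxx t x / 2 * (b - x) ^ 2|
        ≤ (ε2 * |b - x|) * |b - x| := by
      have h := aux_lip_loc (a := x) (b := b) hG (fun u hu =>
        le_trans (htayx u hu) (mul_le_mul_of_nonneg_left (aux_abs_mem hu) hε2.le))
      have heq : v t b - vx t x * b - vxx t x / 2 * (b - x) ^ 2
          - (v t x - vx t x * x - vxx t x / 2 * (x - x) ^ 2)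
          = v t b - v t x - vx t x * (b - x) - vxx t x / 2 * (b - x) ^ 2 := by ring
      rwa [heq] at h
    have habssq : |b - x| * |b - x| = (b - x) ^ 2 := by
      rw [← abs_mul, ← sq, abs_of_nonneg (sq_nonneg _)]
    have hB : |(v t b - v t x - vx t x * (b - x)) / δ - σ ^ 2 / 2 * vxx t x * z ^ 2|
        ≤ ε / 2 := by
      have hcδ : σ ^ 2 / 2 * vxx t x * z ^ 2 * δ = vxx t x / 2 * (b - x) ^ 2 := by
        rw [hbx2]; ring
      have heq : (v t b - v t x - vx t x * (b - x)) / δ - σ ^ 2 / 2 * vxx t x * z ^ 2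
          = (v t b - v t x - vx t x * (b - x) - vxx t x / 2 * (b - x) ^ 2) / δ := by
        rw [← hcδ]
        field_simp [hδ.ne']
      rw [heq, abs_div, abs_of_pos hδ, div_le_iff₀ hδ]
      calc |v t b - v t x - vx t x * (b - x) - vxx t x / 2 * (b - x) ^ 2|
          ≤ (ε2 * |b - x|) * |b - x| := hB2
        _ = ε2 * (σ ^ 2 * δ * z ^ 2) := by rw [mul_assoc, habssq, hbx2]
        _ ≤ ε2 * ((σ ^ 2 * z ^ 2 + 1) * δ) := by
            apply mul_le_mul_of_nonneg_left _ hε2.le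
            nlinarith [sq_nonneg σ, sq_nonneg z]
        _ = ε / 2 * δ := by rw [hε2def]; field_simp
    -- combine
    have hsplit : φ δ z = (v (t + δ) b - v t b) / δ
        + (v t b - v t x - vx t x * (b - x)) / δ := by
      rw [hφdef]
      simp only []
      rw [hbx, ← hbdef, ← add_div]
      congr 1
      ring
    rw [Real.dist_eq, hsplit]
    have : (v (t + δ) b - v t b) / δ + (v t b - v t x - vx t x * (b - x)) / δ
        - (vt t x + σ ^ 2 / 2 * vxx t x * z ^ 2)
        = ((v (t + δ) b - v t b) / δ - vt t x)
          + ((v t b - v t x - vx t x * (b - x)) / δ - σ ^ 2 / 2 * vxx t x * z ^ 2) := by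
      ring
    rw [this]
    calc |_ + _| ≤ _ := abs_add_le _ _
      _ ≤ 3 * ε / 8 + ε / 2 := add_le_add hA hB
      _ < ε := by linarith
  -- dominated convergence
  have hφcont : ∀ δ, Continuous (φ δ) := by
    intro δ
    apply Continuous.div_const
    apply Continuous.sub
    · exact ((hvcont (t + δ)).comp (by continuity)).sub continuous_const
    · exact continuous_const.mul (continuous_const.mul (continuous_const.mul continuous_id))
  have hboundInt : Integrable (fun z : ℝ => C + C * σ ^ 2 * z ^ 2) γ :=
    (integrable_const C).add (aux_integrable_sq.const_mul (C * σ ^ 2))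
  have hpos : ∀ᶠ δ in 𝓝[>] (0:ℝ), 0 < δ := self_mem_nhdsWithin
  have hkey : Tendsto (fun δ => ∫ z, φ δ z ∂γ) (𝓝[>] (0:ℝ))
      (𝓝 (vt t x + σ ^ 2 / 2 * vxx t x)) := by
    have hlim : ∫ z, (vt t x + σ ^ 2 / 2 * vxx t x * z ^ 2) ∂γ
        = vt t x + σ ^ 2 / 2 * vxx t x := by
      rw [integral_add (integrable_const _) (aux_integrable_sq.const_mul _),
        integral_const, integral_const_mul, aux_integral_sq]
      simp
    have h := tendsto_integral_filter_of_dominated_convergence (μ := γ)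
      (F := φ) (f := fun z => vt t x + σ ^ 2 / 2 * vxx t x * z ^ 2)
      (bound := fun z => C + C * σ ^ 2 * z ^ 2)
      (Eventually.of_forall fun δ => (hφcont δ).aestronglyMeasurable)
      (hpos.mono fun δ hδ => Eventually.of_forall fun z => by
        simpa [Real.norm_eq_abs] using hbound δ hδ z)
      hboundInt
      (Eventually.of_forall hptwise)
    rwa [hlim] at h
  have hfin : ∀ᶠ δ in 𝓝[>] (0:ℝ), (∫ z, φ δ z ∂γ) ≤ 0 := by
    have hmem : Ioc (0:ℝ) (1 - t) ∈ 𝓝[>] (0:ℝ) :=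
      Ioc_mem_nhdsGT_of_mem ⟨le_refl 0, by linarith⟩
    filter_upwards [hmem] with δ hδ
    rw [hchg δ hδ.1]
    have hs := hsuper σ hσ t δ x ht0 hδ.1.le (by linarith [hδ.2])
    apply div_nonpos_of_nonpos_of_nonneg (by linarith) hδ.1.le
  exact le_of_tendsto hkey hfin
end
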